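/- If a Banach space X has Property(K) with constant K, then its Opial modulus satisfies r_X(1) ≥ 0, and moreover for any weakly null sequence (x_n) with liminf_n ‖x_n‖ ≥ 1 and any x with ‖x‖ ≥ 1 and liminf_n ‖x_n − x‖ ≤ 1, one derives a contradiction (i.e., liminf_n ‖x_n − x‖ > 1). -/

import Mathlib

open Filter Topology

variable {X : Type*} [NormedAddCommGroup X] [NormedSpace ℝ X]

/-- `x` is a weakly null sequence in `X`. -/
def WeakNull {X : Type*} [NormedAddCommGroup X] [NormedSpace ℝ X] (x : ℕ → X) : Prop :=
  ∀ f : X →L[ℝ] ℝ, Tendsto (fun n => f (x n)) atTop (nhds 0)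

/-- `f` converges to `g` in the weak* topology of the dual. -/
def WeakStarTendsto {X : Type*} [NormedAddCommGroup X] [NormedSpace ℝ X]
    (f : ℕ → X →L[ℝ] ℝ) (g : X →L[ℝ] ℝ) : Prop :=
  ∀ v : X, Tendsto (fun n => f n v) atTop (nhds (g v))

/-- `f` is a weak*-null sequence in the dual. -/
def WeakStarNull {X : Type*} [NormedAddCommGroup X] [NormedSpace ℝ X]
    (f : ℕ → X →L[ℝ] ℝ) : Prop :=
  WeakStarTendsto f 0

/-- The coefficient `R(X)`. -/
noncomputable def RCoef (X : Type*) [NormedAddCommGroup X] [NormedSpace ℝ X] : ℝ :=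
  sSup { r | ∃ (x : ℕ → X) (y : X), (∀ n, ‖x n‖ ≤ 1) ∧ WeakNull x ∧ ‖y‖ ≤ 1 ∧
    r = Filter.liminf (fun n => ‖x n + y‖) atTop }

/-- Opial's modulus of `X`. -/
noncomputable def opialModulus (X : Type*) [NormedAddCommGroup X] [NormedSpace ℝ X] (c : ℝ) : ℝ :=
  sInf { r | ∃ (x : ℕ → X) (y : X), c ≤ ‖y‖ ∧ WeakNull x ∧
    1 ≤ Filter.liminf (fun n => ‖x n‖) atTop ∧
    r = Filter.liminf (fun n => ‖x n - y‖) atTop - 1 }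

/-- Opial's modulus of the dual `X*`, with respect to weak*-null sequences. -/
noncomputable def opialModulusStar (X : Type*) [NormedAddCommGroup X] [NormedSpace ℝ X] (c : ℝ) : ℝ :=
  sInf { r | ∃ (f : ℕ → X →L[ℝ] ℝ) (g : X →L[ℝ] ℝ), c ≤ ‖g‖ ∧ WeakStarNull f ∧
    1 ≤ Filter.liminf (fun n => ‖f n‖) atTop ∧
    r = Filter.liminf (fun n => ‖f n - g‖) atTop - 1 }

/-- Property(K) for `X`. -/
def PropertyK (X : Type*) [NormedAddCommGroup X] [NormedSpace ℝ X] : Prop :=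
  ∃ K, 0 ≤ K ∧ K < 1 ∧ ∀ (x : ℕ → X) (y : X),
    WeakNull x → Tendsto (fun n => ‖x n‖) atTop (nhds 1) →
    Filter.liminf (fun n => ‖x n - y‖) atTop ≤ 1 → ‖y‖ ≤ K

/-- Property(K*) for the dual `X*`. -/
def PropertyKStar (X : Type*) [NormedAddCommGroup X] [NormedSpace ℝ X] : Prop :=
  ∃ K, 0 ≤ K ∧ K < 1 ∧ ∀ (f : ℕ → X →L[ℝ] ℝ) (g : X →L[ℝ] ℝ),
    (∀ n, ‖f n‖ ≤ 1) → WeakStarNull f →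
    Tendsto (fun n => ‖f n‖) atTop (nhds 1) →
    Filter.liminf (fun n => ‖f n - g‖) atTop ≤ 1 → ‖g‖ ≤ K

private theorem stmt12_aux (X : Type*) [NormedAddCommGroup X] [NormedSpace ℝ X] [CompleteSpace X]
    (K : ℝ) (hK0 : 0 ≤ K) (hK1 : K < 1)
    (hK : ∀ (x : ℕ → X) (y : X), WeakNull x →
      Tendsto (fun n => ‖x n‖) atTop (nhds 1) →
      Filter.liminf (fun n => ‖x n - y‖) atTop ≤ 1 → ‖y‖ ≤ K)
    (x : ℕ → X) (y : X) (hx : WeakNull x)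
    (hlx : 1 ≤ Filter.liminf (fun n => ‖x n‖) atTop) (hy : 1 ≤ ‖y‖) :
    1 < Filter.liminf (fun n => ‖x n - y‖) atTop := by
  by_contra hcon
  push_neg at hcon
  -- Case split on coboundedness of ‖x n - y‖
  by_cases hB : BddAbove {a : ℝ | ∀ᶠ n in atTop, a ≤ ‖x n - y‖}
  · -- main case
    have hcob : IsCoboundedUnder (· ≥ ·) atTop (fun n => ‖x n - y‖) := by
      obtain ⟨b, hb⟩ := hB
      exact ⟨b, fun a ha => hb (eventually_map.mp ha)⟩
    have hbdd : IsBoundedUnder (· ≥ ·) atTop (fun n => ‖x n - y‖) :=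
      isBoundedUnder_of ⟨0, fun n => norm_nonneg _⟩
    -- ‖y‖ = 1
    have hy0 : y ≠ 0 := by
      intro h; rw [h, norm_zero] at hy; linarith
    obtain ⟨f, hf1, hfy⟩ := exists_dual_vector ℝ y (norm_ne_zero_iff.mpr hy0)
    have htend : Tendsto (fun n => f y - f (x n)) atTop (nhds ‖y‖) := by
      have h1 : Tendsto (fun n => f y - f (x n)) atTop (nhds (f y - 0)) :=
        tendsto_const_nhds.sub (hx f)
      simpa [hfy] using h1
    have hle : ‖y‖ ≤ Filter.liminf (fun n => ‖x n - y‖) atTop := by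
      rw [← htend.liminf_eq]
      refine liminf_le_liminf ?_ htend.isBoundedUnder_ge hcob
      filter_upwards with n
      calc f y - f (x n) = f (y - x n) := by rw [map_sub]
        _ ≤ ‖f (y - x n)‖ := le_abs_self _
        _ ≤ ‖f‖ * ‖y - x n‖ := f.le_opNorm _
        _ = ‖x n - y‖ := by rw [hf1, one_mul, norm_sub_rev]
    have hy1 : ‖y‖ = 1 := le_antisymm (hle.trans hcon) hy
    -- scaled sequence
    set m : ℕ → ℝ := fun n => max ‖x n‖ 1 with hm
    have hm1 : ∀ n, 1 ≤ m n := fun n => le_max_right _ _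
    have hmpos : ∀ n, 0 < m n := fun n => lt_of_lt_of_le one_pos (hm1 n)
    have hminv : ∀ n, (m n)⁻¹ ≤ 1 := fun n => inv_le_one_of_one_le₀ (hm1 n)
    have hminvpos : ∀ n, 0 < (m n)⁻¹ := fun n => inv_pos.2 (hmpos n)
    set u : ℕ → X := fun n => (m n)⁻¹ • x n with hu
    have hwu : WeakNull u := by
      intro g
      refine squeeze_zero_norm (a := fun n => ‖g (x n)‖) ?_ ?_
      · intro n
        have : g (u n) = (m n)⁻¹ * g (x n) := by simp [hu, smul_eq_mul]
        rw [this, norm_mul, Real.norm_eq_abs ((m n)⁻¹), abs_of_pos (hminvpos n)]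
        calc (m n)⁻¹ * ‖g (x n)‖ ≤ 1 * ‖g (x n)‖ :=
              mul_le_mul_of_nonneg_right (hminv n) (norm_nonneg _)
          _ = ‖g (x n)‖ := one_mul _
      · simpa using (hx g).norm
    have hun : ∀ n, ‖u n‖ = min ‖x n‖ 1 := by
      intro n
      rcases le_total (‖x n‖) 1 with h | h
      · have hmn : m n = 1 := max_eq_right h
        simp [hu, hmn, min_eq_left h]
      · have hmn : m n = ‖x n‖ := max_eq_left h
        have hne : ‖x n‖ ≠ 0 := by positivity
        rw [hu]
        simp only [norm_smul, Real.norm_eq_abs, hmn, abs_inv, abs_norm]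
        rw [inv_mul_cancel₀ hne, min_eq_right h]
    have htu : Tendsto (fun n => ‖u n‖) atTop (nhds 1) := by
      rw [tendsto_order]
      constructor
      · intro a ha
        have hev : ∀ᶠ n in atTop, a < ‖x n‖ :=
          eventually_lt_of_lt_liminf (lt_of_lt_of_le ha hlx)
            (isBoundedUnder_of ⟨0, fun n => norm_nonneg _⟩)
        filter_upwards [hev] with n hn
        rw [hun n]
        exact lt_min hn ha
      · intro a ha
        filter_upwards with n
        rw [hun n]
        exact lt_of_le_of_lt (min_le_right _ _) ha
    have hliu : Filter.liminf (fun n => ‖u n - y‖) atTop ≤ 1 := by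
      apply le_of_forall_pos_le_add
      intro ε hε
      apply liminf_le_of_frequently_le ?_ (isBoundedUnder_of ⟨0, fun n => norm_nonneg _⟩)
      have hfreq : ∃ᶠ n in atTop, ‖x n - y‖ < 1 + ε :=
        frequently_lt_of_liminf_lt hcob (lt_of_le_of_lt hcon (by linarith))
      refine hfreq.mono fun n hn => ?_
      have hdecomp : u n - y = (m n)⁻¹ • (x n - y) + ((m n)⁻¹ - 1) • y := by
        simp only [hu, smul_sub, sub_smul, one_smul]
        abel
      have hb : ‖u n - y‖ ≤ (m n)⁻¹ * ‖x n - y‖ + (1 - (m n)⁻¹) := by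
        rw [hdecomp]
        calc ‖(m n)⁻¹ • (x n - y) + ((m n)⁻¹ - 1) • y‖
            ≤ ‖(m n)⁻¹ • (x n - y)‖ + ‖((m n)⁻¹ - 1) • y‖ := norm_add_le _ _
          _ = (m n)⁻¹ * ‖x n - y‖ + (1 - (m n)⁻¹) := by
              rw [norm_smul, norm_smul, Real.norm_eq_abs, Real.norm_eq_abs,
                abs_of_pos (hminvpos n), abs_of_nonpos (by linarith [hminv n]), hy1]
              ring
      refine hb.trans ?_
      rcases le_total (‖x n - y‖) 1 with h | h
      · nlinarith [hminvpos n, hminv n]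
      · nlinarith [hminvpos n, hminv n]
    have := hK u y hwu htu hliu
    rw [hy1] at this
    linarith
  · -- junk case: liminf ‖x n‖ is the junk value 0, contradicting hlx
    exfalso
    have hT : ¬BddAbove {a : ℝ | ∀ᶠ n in atTop, a ≤ ‖x n‖} := by
      intro ⟨b, hb⟩
      apply hB
      refine ⟨b + ‖y‖, fun a ha => ?_⟩
      have : a - ‖y‖ ∈ {a : ℝ | ∀ᶠ n in atTop, a ≤ ‖x n‖} := by
        filter_upwards [ha] with n hn
        linarith [norm_sub_le (x n) y]
      have hab := hb this
      linarith
    have : Filter.liminf (fun n => ‖x n‖) atTop = 0 := by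
      rw [liminf_eq]
      exact Real.sSup_of_not_bddAbove hT
    rw [this] at hlx
    linarith

theorem stmt12 (X : Type*) [NormedAddCommGroup X] [NormedSpace ℝ X] [CompleteSpace X]
    (K : ℝ) (hK0 : 0 ≤ K) (hK1 : K < 1)
    (hK : ∀ (x : ℕ → X) (y : X), WeakNull x →
      Tendsto (fun n => ‖x n‖) atTop (nhds 1) →
      Filter.liminf (fun n => ‖x n - y‖) atTop ≤ 1 → ‖y‖ ≤ K) :
    0 ≤ opialModulus X 1 ∧
      ∀ (x : ℕ → X) (y : X), WeakNull x →
        1 ≤ Filter.liminf (fun n => ‖x n‖) atTop → 1 ≤ ‖y‖ →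
        1 < Filter.liminf (fun n => ‖x n - y‖) atTop := by
  refine ⟨?_, stmt12_aux X K hK0 hK1 hK⟩
  apply Real.sInf_nonneg
  rintro r ⟨x, y, hy, hwx, hlx, rfl⟩
  have := stmt12_aux X K hK0 hK1 hK x y hwx hlx hy
  linarith
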